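/- Sharp decay rate for reversible random walks: suppose Σ_{j∈N_i} ω_{ij} ≤ μ_i for all i, and let P_μ = Δ_μ + I. Then for any f : V → ℝ^d and any k ∈ ℕ, ∫_G ‖∇_μ P_μ^k f‖₂² dμ ≤ (1 - (2 - λ_N) λ₁)^k ∫_G ‖∇_μ f‖₂² dμ, where λ₁ and λ_N are the smallest nonzero and largest eigenvalues of -Δ_μ respectively. -/

import Mathlib

open Finset

noncomputable def lapV (n d : ℕ) (ω : Fin n → Fin n → ℝ) (μ : Fin n → ℝ)
    (f : Fin n → Fin d → ℝ) (i : Fin n) (k : Fin d) : ℝ :=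
  (∑ j, ω i j * (f j k - f i k)) / μ i

noncomputable def lapS (n : ℕ) (ω : Fin n → Fin n → ℝ) (μ : Fin n → ℝ)
    (f : Fin n → ℝ) (i : Fin n) : ℝ :=
  (∑ j, ω i j * (f j - f i)) / μ i

def IsEig (n : ℕ) (ω : Fin n → Fin n → ℝ) (μ : Fin n → ℝ) (lam : ℝ) : Prop :=
  ∃ v : Fin n → ℝ, v ≠ 0 ∧ ∀ i, -(lapS n ω μ v i) = lam * v i

def GraphConnected (n : ℕ) (ω : Fin n → Fin n → ℝ) : Prop :=
  ∀ i j : Fin n, Relation.ReflTransGen (fun a b => 0 < ω a b) i j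

noncomputable def dirichletV (n d : ℕ) (ω : Fin n → Fin n → ℝ)
    (f : Fin n → Fin d → ℝ) : ℝ :=
  (1/2) * ∑ i, ∑ j, ω i j * (∑ k, (f j k - f i k) ^ 2)

/-- The random walk operator `P_μ = Δ_μ + I`. -/
noncomputable def rwOp (n d : ℕ) (ω : Fin n → Fin n → ℝ) (μ : Fin n → ℝ)
    (f : Fin n → Fin d → ℝ) : Fin n → Fin d → ℝ :=
  fun i k => lapV n d ω μ f i k + f i k

/-! ### Auxiliary scalar definitions -/

noncomputable def dirichletS (n : ℕ) (ω : Fin n → Fin n → ℝ) (g : Fin n → ℝ) : ℝ :=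
  (1/2) * ∑ i, ∑ j, ω i j * (g j - g i) ^ 2

noncomputable def rwS (n : ℕ) (ω : Fin n → Fin n → ℝ) (μ : Fin n → ℝ)
    (g : Fin n → ℝ) : Fin n → ℝ :=
  fun i => lapS n ω μ g i + g i

/-- The symmetrized operator `D^{1/2} (-Δ) D^{-1/2}` on Euclidean space. -/
noncomputable def rwT (n : ℕ) (ω : Fin n → Fin n → ℝ) (μ : Fin n → ℝ) :
    EuclideanSpace ℝ (Fin n) →ₗ[ℝ] EuclideanSpace ℝ (Fin n) where
  toFun u := WithLp.toLp 2 fun i => ∑ j, ω i j * (u i / μ i - u j / (Real.sqrt (μ i) * Real.sqrt (μ j)))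
  map_add' u v := by
    ext i
    simp only [PiLp.add_apply, PiLp.toLp_apply]
    rw [← Finset.sum_add_distrib]
    exact Finset.sum_congr rfl fun j _ => by ring
  map_smul' c u := by
    ext i
    simp only [PiLp.toLp_apply, PiLp.smul_apply, smul_eq_mul, RingHom.id_apply]
    rw [Finset.mul_sum]
    exact Finset.sum_congr rfl fun j _ => by ring

/-- Rescaling map `g ↦ √μ · g`. -/
noncomputable def rwU (n : ℕ) (μ : Fin n → ℝ) (g : Fin n → ℝ) :
    EuclideanSpace ℝ (Fin n) :=
  WithLp.toLp 2 fun i => Real.sqrt (μ i) * g i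

lemma rwT_apply (n : ℕ) (ω : Fin n → Fin n → ℝ) (μ : Fin n → ℝ)
    (u : EuclideanSpace ℝ (Fin n)) (i : Fin n) :
    rwT n ω μ u i = ∑ j, ω i j * (u i / μ i - u j / (Real.sqrt (μ i) * Real.sqrt (μ j))) :=
  rfl

lemma rwT_isSymmetric (n : ℕ) (ω : Fin n → Fin n → ℝ) (μ : Fin n → ℝ)
    (hsym : ∀ i j, ω i j = ω j i) : (rwT n ω μ).IsSymmetric := by
  intro u w
  simp only [PiLp.inner_apply, RCLike.inner_apply, conj_trivial]
  have h1 : ∀ (a b : EuclideanSpace ℝ (Fin n)),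
      ∑ i, rwT n ω μ a i * b i
        = (∑ i, ∑ j, ω i j * (a i / μ i) * b i)
          - ∑ i, ∑ j, ω i j * (a j / (Real.sqrt (μ i) * Real.sqrt (μ j))) * b i := by
    intro a b
    rw [← Finset.sum_sub_distrib]
    refine Finset.sum_congr rfl fun i _ => ?_
    rw [← Finset.sum_sub_distrib, rwT_apply, Finset.sum_mul]
    exact Finset.sum_congr rfl fun j _ => by ring
  have h2 : ∑ i, u i * rwT n ω μ w i = ∑ i, rwT n ω μ w i * u i :=
    Finset.sum_congr rfl fun i _ => by ring
  rw [show ∑ i, w i * rwT n ω μ u i = ∑ i, rwT n ω μ u i * w i from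
    Finset.sum_congr rfl fun i _ => by ring, h1 u w, h1 w u]
  have h3 : ∑ i, ∑ j, ω i j * (u i / μ i) * w i
      = ∑ i, ∑ j, ω i j * (w i / μ i) * u i :=
    Finset.sum_congr rfl fun i _ => Finset.sum_congr rfl fun j _ => by ring
  have h4 : ∑ i, ∑ j, ω i j * (u j / (Real.sqrt (μ i) * Real.sqrt (μ j))) * w i
      = ∑ i, ∑ j, ω i j * (w j / (Real.sqrt (μ i) * Real.sqrt (μ j))) * u i := by
    rw [Finset.sum_comm]
    refine Finset.sum_congr rfl fun i _ => Finset.sum_congr rfl fun j _ => ?_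
    rw [hsym j i, mul_comm (Real.sqrt (μ j)) (Real.sqrt (μ i))]
    ring
  rw [h3, h4]

/-- The quadratic form of `rwT` is the Dirichlet form of the rescaled function. -/
lemma rwT_quadform (n : ℕ) (ω : Fin n → Fin n → ℝ) (μ : Fin n → ℝ)
    (hsym : ∀ i j, ω i j = ω j i) (hμ : ∀ i, 0 < μ i)
    (u : EuclideanSpace ℝ (Fin n)) :
    (inner ℝ (rwT n ω μ u) u : ℝ)
      = (1/2) * ∑ i, ∑ j, ω i j *
          (u j / Real.sqrt (μ j) - u i / Real.sqrt (μ i)) ^ 2 := by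
  have hs0 : ∀ i, Real.sqrt (μ i) ≠ 0 := fun i => (Real.sqrt_pos.mpr (hμ i)).ne'
  have hsq : ∀ i, Real.sqrt (μ i) * Real.sqrt (μ i) = μ i :=
    fun i => Real.mul_self_sqrt (hμ i).le
  set A := ∑ i, ∑ j, ω i j * (u i / Real.sqrt (μ i)) ^ 2 with hA
  set B := ∑ i, ∑ j, ω i j * ((u i / Real.sqrt (μ i)) * (u j / Real.sqrt (μ j))) with hB
  have hL : (inner ℝ (rwT n ω μ u) u : ℝ) = A - B := by
    simp only [PiLp.inner_apply, RCLike.inner_apply, conj_trivial]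
    rw [hA, hB, ← Finset.sum_sub_distrib]
    refine Finset.sum_congr rfl fun i _ => ?_
    rw [← Finset.sum_sub_distrib]
    show u i * rwT n ω μ u i = _
    rw [rwT_apply, Finset.mul_sum]
    refine Finset.sum_congr rfl fun j _ => ?_
    rw [div_pow, Real.sq_sqrt (hμ i).le, div_mul_div_comm]
    ring
  have hswap : ∑ i, ∑ j, ω i j * (u j / Real.sqrt (μ j)) ^ 2 = A := by
    rw [hA, Finset.sum_comm]
    exact Finset.sum_congr rfl fun i _ => Finset.sum_congr rfl fun j _ => by
      rw [hsym i j]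
  have hR : (1/2) * ∑ i, ∑ j, ω i j *
      (u j / Real.sqrt (μ j) - u i / Real.sqrt (μ i)) ^ 2 = A - B := by
    have expand : ∑ i, ∑ j, ω i j *
        (u j / Real.sqrt (μ j) - u i / Real.sqrt (μ i)) ^ 2
        = (∑ i, ∑ j, ω i j * (u j / Real.sqrt (μ j)) ^ 2) + A - 2 * B := by
      rw [hA, hB, Finset.mul_sum, ← Finset.sum_add_distrib, ← Finset.sum_sub_distrib]
      refine Finset.sum_congr rfl fun i _ => ?_
      rw [Finset.mul_sum, ← Finset.sum_add_distrib, ← Finset.sum_sub_distrib]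
      exact Finset.sum_congr rfl fun j _ => by ring
    rw [expand, hswap]
    ring
  rw [hL, hR]

/-- `rwT` applied to a rescaled function. -/
lemma rwT_rwU (n : ℕ) (ω : Fin n → Fin n → ℝ) (μ : Fin n → ℝ)
    (hμ : ∀ i, 0 < μ i) (g : Fin n → ℝ) (i : Fin n) :
    rwT n ω μ (rwU n μ g) i = Real.sqrt (μ i) * (-(lapS n ω μ g i)) := by
  have hs0 : ∀ i, Real.sqrt (μ i) ≠ 0 := fun i => (Real.sqrt_pos.mpr (hμ i)).ne'
  have hsq : ∀ i, Real.sqrt (μ i) * Real.sqrt (μ i) = μ i :=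
    fun i => Real.mul_self_sqrt (hμ i).le
  rw [rwT_apply]
  have hR : Real.sqrt (μ i) * (-(lapS n ω μ g i))
      = ∑ j, -(Real.sqrt (μ i) * (ω i j * (g j - g i)) / μ i) := by
    rw [lapS, Finset.sum_div, mul_neg, Finset.mul_sum, ← Finset.sum_neg_distrib]
    exact Finset.sum_congr rfl fun j _ => by ring
  rw [hR]
  refine Finset.sum_congr rfl fun j _ => ?_
  show ω i j * (rwU n μ g i / μ i - rwU n μ g j / (Real.sqrt (μ i) * Real.sqrt (μ j))) = _
  have e1 : rwU n μ g i / μ i = g i / Real.sqrt (μ i) := by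
    show Real.sqrt (μ i) * g i / μ i = g i / Real.sqrt (μ i)
    rw [div_eq_div_iff (hμ i).ne' (hs0 i)]
    linear_combination g i * hsq i
  have e2 : rwU n μ g j / (Real.sqrt (μ i) * Real.sqrt (μ j))
      = g j / Real.sqrt (μ i) := by
    show Real.sqrt (μ j) * g j / (Real.sqrt (μ i) * Real.sqrt (μ j))
      = g j / Real.sqrt (μ i)
    rw [mul_comm (Real.sqrt (μ i)) (Real.sqrt (μ j)), mul_div_mul_left _ _ (hs0 j)]
  rw [e1, e2, div_sub_div_same, ← neg_div, ← mul_div_assoc,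
    div_eq_div_iff (hs0 i) (hμ i).ne']
  linear_combination (ω i j * (g j - g i)) * hsq i

lemma rwU_eq_zero (n : ℕ) (μ : Fin n → ℝ) (hμ : ∀ i, 0 < μ i) (g : Fin n → ℝ)
    (h : rwU n μ g = 0) : g = 0 := by
  funext i
  have := congrArg (fun x : EuclideanSpace ℝ (Fin n) => x i) h
  simp only [rwU] at this
  have hs0 : Real.sqrt (μ i) ≠ 0 := (Real.sqrt_pos.mpr (hμ i)).ne'
  have h0 : Real.sqrt (μ i) * g i = 0 := this
  rcases mul_eq_zero.mp h0 with h' | h'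
  · exact absurd h' hs0
  · exact h'

/-- Eigenvalue transfer: eigenvector of `rwT` gives graph eigenvalue and conversely. -/
lemma isEig_of_rwT (n : ℕ) (ω : Fin n → Fin n → ℝ) (μ : Fin n → ℝ)
    (hμ : ∀ i, 0 < μ i) (lam : ℝ) (u : EuclideanSpace ℝ (Fin n))
    (hu : u ≠ 0) (heig : rwT n ω μ u = lam • u) : IsEig n ω μ lam := by
  have hs0 : ∀ i, Real.sqrt (μ i) ≠ 0 := fun i => (Real.sqrt_pos.mpr (hμ i)).ne'
  refine ⟨fun i => u i / Real.sqrt (μ i), ?_, ?_⟩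
  · intro hv
    apply hu
    ext i
    have := congrFun hv i
    simp only [Pi.zero_apply, div_eq_iff (hs0 i)] at this
    simpa using this
  · intro i
    have hU : rwU n μ (fun i => u i / Real.sqrt (μ i)) = u := by
      ext i
      show Real.sqrt (μ i) * (u i / Real.sqrt (μ i)) = u i
      rw [mul_comm, div_mul_cancel₀ _ (hs0 i)]
    have h1 : rwT n ω μ u i = lam * u i := by
      rw [heig]; rfl
    have h2 : Real.sqrt (μ i) * (-(lapS n ω μ (fun i => u i / Real.sqrt (μ i)) i))
        = rwT n ω μ u i := by
      rw [← rwT_rwU n ω μ hμ _ i, hU]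
    have h3 : Real.sqrt (μ i) * (-(lapS n ω μ (fun i => u i / Real.sqrt (μ i)) i))
        = Real.sqrt (μ i) * (lam * (u i / Real.sqrt (μ i))) := by
      rw [h2, h1, mul_comm lam (u i)]
      rw [show Real.sqrt (μ i) * (lam * (u i / Real.sqrt (μ i)))
        = (Real.sqrt (μ i) * (u i / Real.sqrt (μ i))) * lam from by ring]
      rw [mul_comm (Real.sqrt (μ i)) (u i / Real.sqrt (μ i)), div_mul_cancel₀ _ (hs0 i)]
    exact mul_left_cancel₀ (hs0 i) h3

lemma rwT_of_isEig (n : ℕ) (ω : Fin n → Fin n → ℝ) (μ : Fin n → ℝ)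
    (hμ : ∀ i, 0 < μ i) (lam : ℝ) (h : IsEig n ω μ lam) :
    ∃ u : EuclideanSpace ℝ (Fin n), u ≠ 0 ∧ rwT n ω μ u = lam • u := by
  obtain ⟨v, hv0, hv⟩ := h
  refine ⟨rwU n μ v, ?_, ?_⟩
  · intro h0
    exact hv0 (rwU_eq_zero n μ hμ v h0)
  · ext i
    rw [rwT_rwU n ω μ hμ v i, hv i]
    show Real.sqrt (μ i) * (lam * v i) = lam * rwU n μ v i
    rw [rwU]
    ring

/-- Every graph eigenvalue is nonnegative and at most 2 (under the row-sum condition). -/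
lemma isEig_bounds (n : ℕ) (ω : Fin n → Fin n → ℝ) (μ : Fin n → ℝ)
    (hsym : ∀ i j, ω i j = ω j i) (hnn : ∀ i j, 0 ≤ ω i j)
    (hμ : ∀ i, 0 < μ i) (hrow : ∀ i, (∑ j, ω i j) ≤ μ i)
    (lam : ℝ) (h : IsEig n ω μ lam) : 0 ≤ lam ∧ lam ≤ 2 := by
  obtain ⟨u, hu0, heig⟩ := rwT_of_isEig n ω μ hμ lam h
  have hip : (inner ℝ (rwT n ω μ u) u : ℝ) = lam * (inner ℝ u u : ℝ) := by
    rw [heig, real_inner_smul_left]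
  have hupos : (0:ℝ) < inner ℝ u u := by
    rcases lt_or_eq_of_le (real_inner_self_nonneg (x := u)) with h | h
    · exact h
    · exact absurd (inner_self_eq_zero.mp h.symm) hu0
  have hq := rwT_quadform n ω μ hsym hμ u
  have hqnn : (0:ℝ) ≤ inner ℝ (rwT n ω μ u) u := by
    rw [hq]
    have : (0:ℝ) ≤ ∑ i, ∑ j, ω i j *
        (u j / Real.sqrt (μ j) - u i / Real.sqrt (μ i)) ^ 2 :=
      Finset.sum_nonneg fun i _ => Finset.sum_nonneg fun j _ =>
        mul_nonneg (hnn i j) (sq_nonneg _)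
    linarith
  constructor
  · nlinarith
  · -- upper bound: quadform ≤ 2 ⟪u,u⟫
    have hub : (inner ℝ (rwT n ω μ u) u : ℝ) ≤ 2 * (inner ℝ u u : ℝ) := by
      rw [hq]
      have hsq : ∀ i, Real.sqrt (μ i) * Real.sqrt (μ i) = μ i :=
        fun i => Real.mul_self_sqrt (hμ i).le
      have hs0 : ∀ i, Real.sqrt (μ i) ≠ 0 := fun i => (Real.sqrt_pos.mpr (hμ i)).ne'
      have step1 : ∑ i, ∑ j, ω i j *
          (u j / Real.sqrt (μ j) - u i / Real.sqrt (μ i)) ^ 2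
          ≤ ∑ i, ∑ j, (2 * (ω i j * (u j / Real.sqrt (μ j))^2)
              + 2 * (ω i j * (u i / Real.sqrt (μ i))^2)) := by
        refine Finset.sum_le_sum fun i _ => Finset.sum_le_sum fun j _ => ?_
        have h2ab : (u j / Real.sqrt (μ j) - u i / Real.sqrt (μ i)) ^ 2
            ≤ 2 * (u j / Real.sqrt (μ j))^2 + 2 * (u i / Real.sqrt (μ i))^2 := by
          nlinarith [sq_nonneg (u j / Real.sqrt (μ j) + u i / Real.sqrt (μ i))]
        nlinarith [hnn i j, sq_nonneg (u j / Real.sqrt (μ j) - u i / Real.sqrt (μ i))]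
      have hswap : ∑ i, ∑ j, ω i j * (u j / Real.sqrt (μ j))^2
          = ∑ i, ∑ j, ω i j * (u i / Real.sqrt (μ i))^2 := by
        rw [Finset.sum_comm]
        exact Finset.sum_congr rfl fun i _ => Finset.sum_congr rfl fun j _ => by
          rw [hsym i j]
      have step2 : ∑ i, ∑ j, ω i j * (u i / Real.sqrt (μ i))^2
          ≤ ∑ i, (u i)^2 := by
        refine Finset.sum_le_sum fun i _ => ?_
        have : ∑ j, ω i j * (u i / Real.sqrt (μ i))^2
            = (∑ j, ω i j) * (u i / Real.sqrt (μ i))^2 := by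
          rw [Finset.sum_mul]
        rw [this]
        have h1 : (∑ j, ω i j) * (u i / Real.sqrt (μ i))^2
            ≤ μ i * (u i / Real.sqrt (μ i))^2 :=
          mul_le_mul_of_nonneg_right (hrow i) (sq_nonneg _)
        have h2 : μ i * (u i / Real.sqrt (μ i))^2 = (u i)^2 := by
          rw [div_pow, Real.sq_sqrt (hμ i).le, ← mul_div_assoc,
            mul_div_cancel_left₀ _ (hμ i).ne']
        linarith
      have hinner : (inner ℝ u u : ℝ) = ∑ i, (u i)^2 := by
        simp only [PiLp.inner_apply, RCLike.inner_apply, conj_trivial]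
        exact Finset.sum_congr rfl fun i _ => by ring
      rw [hinner]
      calc (1/2) * ∑ i, ∑ j, ω i j *
          (u j / Real.sqrt (μ j) - u i / Real.sqrt (μ i)) ^ 2
          ≤ (1/2) * ∑ i, ∑ j, (2 * (ω i j * (u j / Real.sqrt (μ j))^2)
              + 2 * (ω i j * (u i / Real.sqrt (μ i))^2)) := by linarith
        _ = 2 * ∑ i, ∑ j, ω i j * (u i / Real.sqrt (μ i))^2 := by
            have : ∑ i, ∑ j, (2 * (ω i j * (u j / Real.sqrt (μ j))^2)
                + 2 * (ω i j * (u i / Real.sqrt (μ i))^2))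
                = 2 * (∑ i, ∑ j, ω i j * (u j / Real.sqrt (μ j))^2)
                  + 2 * (∑ i, ∑ j, ω i j * (u i / Real.sqrt (μ i))^2) := by
              rw [Finset.mul_sum, Finset.mul_sum, ← Finset.sum_add_distrib]
              refine Finset.sum_congr rfl fun i _ => ?_
              rw [Finset.mul_sum, Finset.mul_sum, ← Finset.sum_add_distrib]
            rw [this, hswap]
            ring
        _ ≤ 2 * ∑ i, (u i)^2 := by
            have := step2
            nlinarith
    nlinarith

/-- The one-step decay inequality for the scalar Dirichlet energy. -/
lemma onestep (n : ℕ) (ω : Fin n → Fin n → ℝ) (μ : Fin n → ℝ)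
    (hsym : ∀ i j, ω i j = ω j i) (hnn : ∀ i j, 0 ≤ ω i j)
    (hμ : ∀ i, 0 < μ i) (hrow : ∀ i, (∑ j, ω i j) ≤ μ i)
    (lam1 : ℝ) (hlam1 : IsEig n ω μ lam1) (hne : lam1 ≠ 0)
    (hmin : ∀ lam, IsEig n ω μ lam → lam ≠ 0 → lam1 ≤ lam)
    (lamN : ℝ) (hlamN : IsGreatest {lam | IsEig n ω μ lam} lamN)
    (g : Fin n → ℝ) :
    dirichletS n ω (rwS n ω μ g) ≤ (1 - (2 - lamN) * lam1) * dirichletS n ω g := by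
  classical
  have hT := rwT_isSymmetric n ω μ hsym
  have hn : Module.finrank ℝ (EuclideanSpace ℝ (Fin n)) = n := finrank_euclideanSpace_fin
  set b := hT.eigenvectorBasis hn with hb
  set lam := hT.eigenvalues hn with hlam
  -- eigenvalue facts
  have hisEig : ∀ i, IsEig n ω μ (lam i) := by
    intro i
    have h1 := hT.apply_eigenvectorBasis hn i
    exact isEig_of_rwT n ω μ hμ (lam i) (b i) (b.toBasis.ne_zero i) h1
  have hlam10 : 0 < lam1 :=
    lt_of_le_of_ne (isEig_bounds n ω μ hsym hnn hμ hrow lam1 hlam1).1 (Ne.symm hne)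
  have hlamN2 : lamN ≤ 2 := (isEig_bounds n ω μ hsym hnn hμ hrow lamN hlamN.1).2
  have hlam1N : lam1 ≤ lamN := hlamN.2 hlam1
  have hlamnn : ∀ i, 0 ≤ lam i := fun i =>
    (isEig_bounds n ω μ hsym hnn hμ hrow (lam i) (hisEig i)).1
  have hlamle : ∀ i, lam i ≤ lamN := fun i => hlamN.2 (hisEig i)
  have hlammin : ∀ i, lam i ≠ 0 → lam1 ≤ lam i := fun i h => hmin (lam i) (hisEig i) h
  -- quadratic form in eigencoordinates
  have key : ∀ w : EuclideanSpace ℝ (Fin n),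
      (inner ℝ (rwT n ω μ w) w : ℝ) = ∑ i, lam i * (b.repr w i)^2 := by
    intro w
    rw [← LinearIsometryEquiv.inner_map_map b.repr (rwT n ω μ w) w]
    simp only [PiLp.inner_apply, RCLike.inner_apply, conj_trivial]
    refine Finset.sum_congr rfl fun i _ => ?_
    rw [hT.eigenvectorBasis_apply_self_apply hn w i]
    simp only [RCLike.ofReal_real_eq_id, id_eq]
    ring
  set u := rwU n μ g with hu
  have hDg : dirichletS n ω g = ∑ i, lam i * (b.repr u i)^2 := by
    rw [← key u, rwT_quadform n ω μ hsym hμ u]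
    rw [dirichletS]
    congr 1
    refine Finset.sum_congr rfl fun i _ => Finset.sum_congr rfl fun j _ => ?_
    have hs0 : ∀ i, Real.sqrt (μ i) ≠ 0 := fun i => (Real.sqrt_pos.mpr (hμ i)).ne'
    have h1 : ∀ i, u i / Real.sqrt (μ i) = g i := by
      intro i
      rw [hu]
      show Real.sqrt (μ i) * g i / Real.sqrt (μ i) = g i
      rw [mul_div_cancel_left₀ _ (hs0 i)]
    rw [h1 i, h1 j]
  have hu' : rwU n μ (rwS n ω μ g) = u - rwT n ω μ u := by
    ext i
    have h2 : rwT n ω μ u i = Real.sqrt (μ i) * (-(lapS n ω μ g i)) :=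
      rwT_rwU n ω μ hμ g i
    show Real.sqrt (μ i) * (lapS n ω μ g i + g i) = (u - rwT n ω μ u) i
    rw [PiLp.sub_apply, h2, hu]
    show Real.sqrt (μ i) * (lapS n ω μ g i + g i)
      = Real.sqrt (μ i) * g i - Real.sqrt (μ i) * (-(lapS n ω μ g i))
    ring
  have hDPg : dirichletS n ω (rwS n ω μ g)
      = ∑ i, lam i * ((1 - lam i) * b.repr u i)^2 := by
    have hq := rwT_quadform n ω μ hsym hμ (rwU n μ (rwS n ω μ g))
    have h1 : ∀ i, rwU n μ (rwS n ω μ g) i / Real.sqrt (μ i) = rwS n ω μ g i := by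
      intro i
      have hs0 : Real.sqrt (μ i) ≠ 0 := (Real.sqrt_pos.mpr (hμ i)).ne'
      show Real.sqrt (μ i) * rwS n ω μ g i / Real.sqrt (μ i) = rwS n ω μ g i
      rw [mul_div_cancel_left₀ _ hs0]
    have hD1 : dirichletS n ω (rwS n ω μ g)
        = (inner ℝ (rwT n ω μ (rwU n μ (rwS n ω μ g))) (rwU n μ (rwS n ω μ g)) : ℝ) := by
      rw [hq, dirichletS]
      congr 1
      refine Finset.sum_congr rfl fun i _ => Finset.sum_congr rfl fun j _ => ?_
      rw [h1 i, h1 j]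
    rw [hD1, hu', key]
    refine Finset.sum_congr rfl fun i _ => ?_
    rw [map_sub]
    have : b.repr (rwT n ω μ u) i = lam i * b.repr u i :=
      hT.eigenvectorBasis_apply_self_apply hn u i
    simp only [PiLp.sub_apply, this]
    ring
  rw [hDPg, hDg, Finset.mul_sum]
  refine Finset.sum_le_sum fun i _ => ?_
  rcases eq_or_ne (lam i) 0 with h0 | h0
  · simp [h0]
  · have hge : lam1 ≤ lam i := hlammin i h0
    have hkey : (1 - lam i)^2 ≤ 1 - (2 - lamN) * lam1 := by
      nlinarith [hlamnn i, hlamle i]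
    calc lam i * ((1 - lam i) * b.repr u i)^2
        = (1 - lam i)^2 * (lam i * (b.repr u i)^2) := by ring
      _ ≤ (1 - (2 - lamN) * lam1) * (lam i * (b.repr u i)^2) :=
          mul_le_mul_of_nonneg_right hkey
            (mul_nonneg (hlamnn i) (sq_nonneg _))

lemma dirichletS_nonneg (n : ℕ) (ω : Fin n → Fin n → ℝ) (hnn : ∀ i j, 0 ≤ ω i j)
    (g : Fin n → ℝ) : 0 ≤ dirichletS n ω g := by
  rw [dirichletS]
  have : (0:ℝ) ≤ ∑ i, ∑ j, ω i j * (g j - g i)^2 :=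
    Finset.sum_nonneg fun i _ => Finset.sum_nonneg fun j _ =>
      mul_nonneg (hnn i j) (sq_nonneg _)
  linarith

/-- Sharp decay rate for reversible random walks:
`E(P_μ^k f) ≤ (1 - (2 - λ_N) λ₁)^k E(f)`. -/
theorem rw_dirichlet_decay (n d : ℕ) (ω : Fin n → Fin n → ℝ) (μ : Fin n → ℝ)
    (hsym : ∀ i j, ω i j = ω j i) (hnn : ∀ i j, 0 ≤ ω i j)
    (hμ : ∀ i, 0 < μ i)
    (hconn : GraphConnected n ω)
    (hrow : ∀ i, (∑ j, ω i j) ≤ μ i)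
    (lam1 : ℝ) (hlam1 : IsEig n ω μ lam1) (hne : lam1 ≠ 0)
    (hmin : ∀ lam, IsEig n ω μ lam → lam ≠ 0 → lam1 ≤ lam)
    (lamN : ℝ) (hlamN : IsGreatest {lam | IsEig n ω μ lam} lamN)
    (f : Fin n → Fin d → ℝ) (k : ℕ) :
    dirichletV n d ω ((rwOp n d ω μ)^[k] f)
      ≤ (1 - (2 - lamN) * lam1) ^ k * dirichletV n d ω f := by
  -- basic eigenvalue facts give nonnegativity of the decay factor
  have hlam10 : 0 < lam1 :=
    lt_of_le_of_ne (isEig_bounds n ω μ hsym hnn hμ hrow lam1 hlam1).1 (Ne.symm hne)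
  have hlamN2 : lamN ≤ 2 := (isEig_bounds n ω μ hsym hnn hμ hrow lamN hlamN.1).2
  have hlam1N : lam1 ≤ lamN := hlamN.2 hlam1
  have hc0 : 0 ≤ 1 - (2 - lamN) * lam1 := by
    nlinarith [sq_nonneg (1 - lamN),
      mul_le_mul_of_nonneg_left hlam1N (by linarith : (0:ℝ) ≤ 2 - lamN)]
  -- scalar iterated decay
  have hiter : ∀ (m : ℕ) (g : Fin n → ℝ),
      dirichletS n ω ((rwS n ω μ)^[m] g)
        ≤ (1 - (2 - lamN) * lam1) ^ m * dirichletS n ω g := by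
    intro m
    induction m with
    | zero => intro g; simp
    | succ m ih =>
      intro g
      rw [Function.iterate_succ_apply']
      calc dirichletS n ω (rwS n ω μ ((rwS n ω μ)^[m] g))
          ≤ (1 - (2 - lamN) * lam1) * dirichletS n ω ((rwS n ω μ)^[m] g) :=
            onestep n ω μ hsym hnn hμ hrow lam1 hlam1 hne hmin lamN hlamN _
        _ ≤ (1 - (2 - lamN) * lam1) * ((1 - (2 - lamN) * lam1) ^ m * dirichletS n ω g) :=
            mul_le_mul_of_nonneg_left (ih g) hc0
        _ = (1 - (2 - lamN) * lam1) ^ (m + 1) * dirichletS n ω g := by ring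
  -- coordinatewise description of the iterated random walk
  have hcoord : ∀ (m : ℕ) (kk : Fin d),
      (fun i => ((rwOp n d ω μ)^[m] f) i kk) = (rwS n ω μ)^[m] (fun i => f i kk) := by
    intro m
    induction m with
    | zero => intro kk; rfl
    | succ m ih =>
      intro kk
      rw [Function.iterate_succ_apply', Function.iterate_succ_apply', ← ih kk]
      funext i
      show lapV n d ω μ ((rwOp n d ω μ)^[m] f) i kk + ((rwOp n d ω μ)^[m] f) i kk
        = lapS n ω μ (fun i => ((rwOp n d ω μ)^[m] f) i kk) i
          + (fun i => ((rwOp n d ω μ)^[m] f) i kk) i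
      rfl
  -- splitting the vector Dirichlet energy into coordinates
  have hsplit : ∀ F : Fin n → Fin d → ℝ,
      dirichletV n d ω F = ∑ kk, dirichletS n ω (fun i => F i kk) := by
    intro F
    rw [dirichletV]
    have h1 : ∑ i, ∑ j, ω i j * (∑ kk, (F j kk - F i kk) ^ 2)
        = ∑ kk : Fin d, ∑ i, ∑ j, ω i j * (F j kk - F i kk) ^ 2 := by
      have h2 : ∀ i : Fin n, ∑ j, ω i j * (∑ kk, (F j kk - F i kk) ^ 2)
          = ∑ kk : Fin d, ∑ j, ω i j * (F j kk - F i kk) ^ 2 := by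
        intro i
        rw [Finset.sum_comm]
        exact Finset.sum_congr rfl fun j _ => by rw [Finset.mul_sum]
      rw [Finset.sum_congr rfl fun i _ => h2 i, Finset.sum_comm]
    rw [h1, Finset.mul_sum]
    exact Finset.sum_congr rfl fun kk _ => rfl
  rw [hsplit, hsplit]
  calc ∑ kk, dirichletS n ω (fun i => ((rwOp n d ω μ)^[k] f) i kk)
      = ∑ kk, dirichletS n ω ((rwS n ω μ)^[k] (fun i => f i kk)) := by
        exact Finset.sum_congr rfl fun kk _ => by rw [hcoord k kk]
    _ ≤ ∑ kk, (1 - (2 - lamN) * lam1) ^ k * dirichletS n ω (fun i => f i kk) :=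
        Finset.sum_le_sum fun kk _ => hiter k _
    _ = (1 - (2 - lamN) * lam1) ^ k * ∑ kk, dirichletS n ω (fun i => f i kk) := by
        rw [Finset.mul_sum]
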